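/- Let n and r be positive integers and let w ∈ S(n,r). If k is a double ascent of w, then the set {ℓ : k < ℓ < n and w_{ℓ+1} < w_k} is nonempty, and for its smallest element ℓ one has w_k ≤ w_ℓ. Moreover, the following are equivalent: (a) for every double ascent k of w, letting ℓ be the smallest index with k < ℓ < n and w_{ℓ+1} < w_k, one has w_k = w_ℓ; (b) w has the matching property. -/
import Mathlib


open scoped Classical

noncomputable section

/-- Value of a word `w : Fin (n+1) → ℕ` at a natural index (junk value `0` out of range). -/
def wv {n : ℕ} (w : Fin (n + 1) → ℕ) (k : ℕ) : ℕ :=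
  if h : k < n + 1 then w ⟨k, h⟩ else 0

/-- The number of ascents of a word `w = (w_0, w_1, …, w_n)`, i.e. the number of indices
`i ∈ {0,…,n-1}` with `w_i < w_{i+1}`. -/
def asc {n : ℕ} (w : Fin (n + 1) → ℕ) : ℕ :=
  ((Finset.range n).filter fun i => wv w i < wv w (i + 1)).card

/-- The set `S(n,r)` of Smirnov words `w = (w_0, …, w_n) ∈ {0,…,r-1}^{n+1}` with
`w_0 = w_n = 0` and no two consecutive entries equal. -/
def smirnov (n r : ℕ) : Finset (Fin (n + 1) → ℕ) :=
  (Fintype.piFinset fun _ => Finset.range r).filter fun w =>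
    wv w 0 = 0 ∧ wv w n = 0 ∧ ∀ i < n, wv w i ≠ wv w (i + 1)

/-- `k ∈ {1,…,n-1}` is a double ascent of `w` if `w_{k-1} < w_k < w_{k+1}`. -/
def doubleAscent {n : ℕ} (w : Fin (n + 1) → ℕ) (k : ℕ) : Prop :=
  1 ≤ k ∧ k < n ∧ wv w (k - 1) < wv w k ∧ wv w k < wv w (k + 1)

/-- `k ∈ {1,…,n-1}` is a double descent of `w` if `w_{k-1} > w_k > w_{k+1}`. -/
def doubleDescent {n : ℕ} (w : Fin (n + 1) → ℕ) (k : ℕ) : Prop :=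
  1 ≤ k ∧ k < n ∧ wv w k < wv w (k - 1) ∧ wv w (k + 1) < wv w k

/-- `w` has the matching property: for every double ascent `k` of `w` there is a double
descent `ℓ > k` with `w_k = w_ℓ` and `w_k ≤ w_j` for all `k < j < ℓ`. -/
def hasMatching {n : ℕ} (w : Fin (n + 1) → ℕ) : Prop :=
  ∀ k, doubleAscent w k →
    ∃ l, k < l ∧ doubleDescent w l ∧ wv w k = wv w l ∧
      ∀ j, k < j → j < l → wv w k ≤ wv w j

/-- The set of indices `ℓ` with `k < ℓ < n` and `w_{ℓ+1} < w_k`. -/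
def rightSet {n : ℕ} (w : Fin (n + 1) → ℕ) (k : ℕ) : Set ℕ :=
  {l | k < l ∧ l < n ∧ wv w (l + 1) < wv w k}

/-- The set of indices `ℓ` with `1 ≤ ℓ < k` and `w_{ℓ-1} < w_k`. -/
def leftSet {n : ℕ} (w : Fin (n + 1) → ℕ) (k : ℕ) : Set ℕ :=
  {l | 1 ≤ l ∧ l < k ∧ wv w (l - 1) < wv w k}

/-- The word `w'` obtained from `w` by deleting `w_k` and inserting it between
`w_{ℓ-1}` and `w_ℓ` (for `ℓ < k`): `w'_ℓ = w_k`, `w'_{i+1} = w_i` for `ℓ ≤ i < k`,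
and `w'_i = w_i` for all other indices. -/
def leftMove {n : ℕ} (w : Fin (n + 1) → ℕ) (k l : ℕ) : Fin (n + 1) → ℕ :=
  fun i => if (i : ℕ) = l then wv w k
    else if l < (i : ℕ) ∧ (i : ℕ) ≤ k then wv w ((i : ℕ) - 1) else w i

/-- The word `w''` obtained from `w` by deleting `w_k` and inserting it between
`w_ℓ` and `w_{ℓ+1}` (for `k < ℓ`): `w''_ℓ = w_k`, `w''_{i-1} = w_i` for `k < i ≤ ℓ`,
and `w''_i = w_i` for all other indices. -/
def rightMove {n : ℕ} (w : Fin (n + 1) → ℕ) (k l : ℕ) : Fin (n + 1) → ℕ :=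
  fun i => if (i : ℕ) = l then wv w k
    else if k ≤ (i : ℕ) ∧ (i : ℕ) < l then wv w ((i : ℕ) + 1) else w i

/-- For `w ∈ S(n,r)`: if `k` is a double ascent of `w` then the set of indices `ℓ` with
`k < ℓ < n` and `w_{ℓ+1} < w_k` is nonempty and its smallest element `ℓ` satisfies
`w_k ≤ w_ℓ`; moreover `w` has the matching property iff for every double ascent `k`,
the smallest such `ℓ` satisfies `w_k = w_ℓ`. -/
theorem rightSet_nonempty_and_matching_iff (n r : ℕ) (hn : 0 < n) (hr : 0 < r)
    (w : Fin (n + 1) → ℕ) (hw : w ∈ smirnov n r) :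
    (∀ k, doubleAscent w k →
      (rightSet w k).Nonempty ∧ wv w k ≤ wv w (sInf (rightSet w k))) ∧
    ((∀ k, doubleAscent w k → wv w k = wv w (sInf (rightSet w k))) ↔ hasMatching w) := by
  simp only [smirnov, Finset.mem_filter] at hw
  obtain ⟨-, h0, hN, hne⟩ := hw
  -- nonemptiness of rightSet
  have hNE : ∀ k, doubleAscent w k → (rightSet w k).Nonempty := by
    intro k hk
    obtain ⟨hk1, hk2, hk3, hk4⟩ := hk
    refine ⟨n - 1, ?_, ?_, ?_⟩
    · -- k < n - 1
      by_contra h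
      have hkn : k + 1 = n := by omega
      rw [hkn, hN] at hk4
      omega
    · omega
    · have h1 : n - 1 + 1 = n := by omega
      rw [h1, hN]
      omega
  have hmem : ∀ k, doubleAscent w k → sInf (rightSet w k) ∈ rightSet w k := by
    intro k hk
    exact Nat.sInf_mem (hNE k hk)
  -- minimality: values stay ≥ w_k up to sInf
  have hmin : ∀ k, doubleAscent w k → ∀ j, k < j → j ≤ sInf (rightSet w k) →
      wv w k ≤ wv w j := by
    intro k hk j hj1 hj2
    obtain ⟨hl1, hl2, hl3⟩ := hmem k hk
    rcases eq_or_lt_of_le (show k + 1 ≤ j by omega) with h | h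
    · rw [← h]; exact le_of_lt hk.2.2.2
    · have hjm : j - 1 ∉ rightSet w k := Nat.notMem_of_lt_sInf (by omega)
      simp only [rightSet, Set.mem_setOf_eq, not_and, not_lt] at hjm
      have := hjm (by omega) (by omega)
      rwa [show j - 1 + 1 = j by omega] at this
  constructor
  · intro k hk
    refine ⟨hNE k hk, hmin k hk _ (hmem k hk).1 le_rfl⟩
  constructor
  · -- (a) → matching
    intro ha k hk
    obtain ⟨hl1, hl2, hl3⟩ := hmem k hk
    have heq := ha k hk
    refine ⟨sInf (rightSet w k), hl1, ⟨by omega, hl2, ?_, by omega⟩, heq, ?_⟩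
    · -- w_{ℓ-1} > w_ℓ
      have hlk : k + 1 < sInf (rightSet w k) := by
        rcases eq_or_lt_of_le (show k + 1 ≤ sInf (rightSet w k) by omega) with h | h
        · exfalso
          have := hk.2.2.2
          rw [h] at this
          omega
        · exact h
      have h1 : wv w k ≤ wv w (sInf (rightSet w k) - 1) :=
        hmin k hk _ (by omega) (by omega)
      have h2 : wv w (sInf (rightSet w k) - 1) ≠ wv w (sInf (rightSet w k)) := by
        have := hne (sInf (rightSet w k) - 1) (by omega)
        rwa [show sInf (rightSet w k) - 1 + 1 = sInf (rightSet w k) by omega] at this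
      omega
    · intro j hj1 hj2
      exact hmin k hk j hj1 (le_of_lt hj2)
  · -- matching → (a)
    intro hm k hk
    obtain ⟨l, hkl, ⟨hd1, hd2, hd3, hd4⟩, heq, hall⟩ := hm k hk
    have hlmem : l ∈ rightSet w k := ⟨hkl, hd2, by omega⟩
    have h1 : sInf (rightSet w k) ≤ l := Nat.sInf_le hlmem
    obtain ⟨hi1, hi2, hi3⟩ := hmem k hk
    have h2 : l ≤ sInf (rightSet w k) := by
      by_contra h
      push_neg at h
      rcases eq_or_lt_of_le (show sInf (rightSet w k) + 1 ≤ l by omega) with he | he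
      · rw [he, ← heq] at hi3; omega
      · have := hall (sInf (rightSet w k) + 1) (by omega) he
        omega
    have : sInf (rightSet w k) = l := le_antisymm h1 h2
    rw [this, ← heq]
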